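/- Index identity for gcd and lcm: let u, v ∈ S, let d ∈ S be a greatest common divisor of u and v (d divides both and every common divisor of u and v divides d), and let m ∈ S satisfy u·S ∩ v·S = m·S. If d is an ordered product of a irreducible elements of S, m an ordered product of b irreducibles, u an ordered product of c irreducibles, and v an ordered product of e irreducibles (empty products allowed, equal to 1), then a + b = c + e. -/

import Mathlib

open scoped BigOperators

/-- `u` divides `w` in `S`: `w ∈ u·S`. -/
def SDvd {G : Type*} [Group G] (S : Submonoid G) (u w : G) : Prop := ∃ s ∈ S, w = u * s

/-- The left set `u·S = {u * s : s ∈ S}`. -/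
def leftSet {G : Type*} [Group G] (S : Submonoid G) (u : G) : Set G := {w | ∃ s ∈ S, w = u * s}

/-- `τ(u)`: the number of ordered factorizations `u = v * w` with `v, w ∈ S`. -/
noncomputable def tau {G : Type*} [Group G] (S : Submonoid G) (u : G) : ℕ :=
  Set.ncard {p : G × G | p.1 ∈ S ∧ p.2 ∈ S ∧ p.1 * p.2 = u}

/-- An integral monoid: a submonoid of a group satisfying Axioms I, II, III. -/
structure IntegralMonoid {G : Type*} [Group G] (S : Submonoid G) : Prop where
  ax1 : ∀ u ∈ S, u⁻¹ ∈ S → u = 1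
  ax2 : ∀ u : G, ∃ x ∈ S, ∃ y ∈ S, u = x * y⁻¹ ∧
        ∀ z ∈ S, ∀ w ∈ S, u = z * w⁻¹ → ∃ c ∈ S, z = x * c ∧ w = y * c
  ax3 : ∀ u ∈ S, {p : G × G | p.1 ∈ S ∧ p.2 ∈ S ∧ p.1 * p.2 = u}.Finite

/-- Axiom IV′ (homogeneity), in the equivalent form proved in the paper. -/
def Homogeneous {G : Type*} [Group G] (S : Submonoid G) : Prop :=
  ∀ w u v : G, w ∈ S → u ∈ S → v ∈ S →
    (∀ d ∈ S, SDvd S d w → SDvd S d u → d = 1) →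
    (∀ d ∈ S, SDvd S d w → SDvd S d v → d = 1) →
    leftSet S w ∩ leftSet S u = leftSet S w ∩ leftSet S v → u = v

namespace IMaux

variable {G : Type*} [Group G] (S : Submonoid G)

theorem sdvd_refl {a : G} : SDvd S a a := ⟨1, S.one_mem, (mul_one a).symm⟩

theorem sdvd_mul {a b : G} (hb : b ∈ S) : SDvd S a (a * b) := ⟨b, hb, rfl⟩

theorem sdvd_trans {a b c : G} (h1 : SDvd S a b) (h2 : SDvd S b c) : SDvd S a c := by
  obtain ⟨s, hs, rfl⟩ := h1; obtain ⟨t, ht, rfl⟩ := h2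
  exact ⟨s * t, S.mul_mem hs ht, mul_assoc _ _ _⟩

theorem one_sdvd {a : G} (ha : a ∈ S) : SDvd S 1 a := ⟨a, ha, (one_mul a).symm⟩

theorem mem_of_sdvd {a w : G} (ha : a ∈ S) (h : SDvd S a w) : w ∈ S := by
  obtain ⟨s, hs, rfl⟩ := h; exact S.mul_mem ha hs

theorem sdvd_mul_left {a b c : G} (h : SDvd S b c) : SDvd S (a * b) (a * c) := by
  obtain ⟨s, hs, rfl⟩ := h; exact ⟨s, hs, (mul_assoc _ _ _).symm⟩

theorem sdvd_of_mul_sdvd {a b c : G} (h : SDvd S (a * b) (a * c)) : SDvd S b c := by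
  obtain ⟨s, hs, hh⟩ := h
  refine ⟨s, hs, ?_⟩
  rw [mul_assoc] at hh
  exact mul_left_cancel hh

theorem sdvd_antisymm (hS : IntegralMonoid S) {a b : G}
    (h1 : SDvd S a b) (h2 : SDvd S b a) : a = b := by
  obtain ⟨s, hs, rfl⟩ := h1
  obtain ⟨t, ht, hh⟩ := h2
  have hst : s * t = 1 := by
    have h3 : a * 1 = a * (s * t) := by rw [mul_one, ← mul_assoc]; exact hh
    exact (mul_left_cancel h3).symm
  have hs1 : s = 1 := hS.ax1 s hs (by rw [inv_eq_of_mul_eq_one_right hst] at *; exact ht)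
  rw [hs1, mul_one]

theorem sdvd_one (hS : IntegralMonoid S) {a : G} (ha : a ∈ S) (h : SDvd S a 1) : a = 1 :=
  sdvd_antisymm S hS h (one_sdvd S ha)

/-- least common multiple predicate -/
def IsLcm (u v m : G) : Prop :=
  m ∈ S ∧ SDvd S u m ∧ SDvd S v m ∧ ∀ t, SDvd S u t → SDvd S v t → SDvd S m t

theorem isLcm_swap {u v m : G} (h : IsLcm S u v m) : IsLcm S v u m :=
  ⟨h.1, h.2.2.1, h.2.1, fun t h1 h2 => h.2.2.2 t h2 h1⟩

theorem exists_isLcm (hS : IntegralMonoid S) {a b : G} (ha : a ∈ S) (hb : b ∈ S) :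
    ∃ m, IsLcm S a b m := by
  obtain ⟨x, hx, y, hy, hxy, hmin⟩ := hS.ax2 (a⁻¹ * b)
  have key : b * y = a * x := by
    have hb' : b = a * (x * y⁻¹) := by rw [← hxy]; group
    rw [hb']; group
  refine ⟨a * x, ⟨S.mul_mem ha hx, sdvd_mul S hx, ⟨y, hy, key.symm⟩, ?_⟩⟩
  rintro t ⟨z, hz, rfl⟩ ⟨w, hw, hw2⟩
  have h3 : a⁻¹ * b = z * w⁻¹ := by
    have hb2 : b = a * z * w⁻¹ := by rw [hw2]; group
    rw [hb2]; group
  obtain ⟨c, hc, hzc, _⟩ := hmin z hz w hw h3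
  exact ⟨c, hc, by rw [hzc, mul_assoc]⟩

theorem leftSet_eq_of_isLcm {u v m : G} (h : IsLcm S u v m) :
    leftSet S u ∩ leftSet S v = leftSet S m := by
  ext t
  constructor
  · rintro ⟨h1, h2⟩; exact h.2.2.2 t h1 h2
  · intro htm; exact ⟨sdvd_trans S h.2.1 htm, sdvd_trans S h.2.2.1 htm⟩

/-- the set of left divisors of `u` lying in `S` -/
def divs (u : G) : Set G := {a | a ∈ S ∧ SDvd S a u}

theorem divs_finite (hS : IntegralMonoid S) {u : G} (hu : u ∈ S) : (divs S u).Finite := by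
  have h := hS.ax3 u hu
  have heq : divs S u = Prod.fst '' {p : G × G | p.1 ∈ S ∧ p.2 ∈ S ∧ p.1 * p.2 = u} := by
    ext a
    constructor
    · rintro ⟨ha, s, hs, hus⟩
      exact ⟨(a, s), ⟨ha, hs, hus.symm⟩, rfl⟩
    · rintro ⟨⟨a', s⟩, ⟨hh1, hh2, hh3⟩, rfl⟩
      exact ⟨hh1, s, hh2, hh3.symm⟩
  rw [heq]
  exact h.image _

theorem one_mem_divs {u : G} (hu : u ∈ S) : (1 : G) ∈ divs S u :=
  ⟨S.one_mem, one_sdvd S hu⟩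

theorem self_mem_divs {u : G} (hu : u ∈ S) : u ∈ divs S u := ⟨hu, sdvd_refl S⟩

theorem ncard_divs_pos (hS : IntegralMonoid S) {u : G} (hu : u ∈ S) :
    0 < (divs S u).ncard :=
  (Set.ncard_pos (divs_finite S hS hu)).mpr ⟨1, one_mem_divs S hu⟩

theorem ncard_divs_lt_left (hS : IntegralMonoid S) {a b : G} (ha : a ∈ S) (hb : b ∈ S)
    (hne : a ≠ 1) : (divs S b).ncard < (divs S (a * b)).ncard := by
  have hab : a * b ∈ S := S.mul_mem ha hb
  have hfin := divs_finite S hS hab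
  have hfinb := divs_finite S hS hb
  have hsub : insert (1 : G) ((a * ·) '' divs S b) ⊆ divs S (a * b) := by
    rintro x hx
    rcases hx with rfl | ⟨c, ⟨hcS, hcd⟩, rfl⟩
    · exact one_mem_divs S hab
    · exact ⟨S.mul_mem ha hcS, sdvd_mul_left S hcd⟩
  have h1 : (1 : G) ∉ (a * ·) '' divs S b := by
    rintro ⟨c, ⟨hcS, _⟩, hc1⟩
    apply hne
    apply hS.ax1 a ha
    rw [show a⁻¹ = c from by rw [← inv_eq_of_mul_eq_one_right hc1]]
    exact hcS
  have himg : ((a * ·) '' divs S b).ncard = (divs S b).ncard :=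
    Set.ncard_image_of_injective _ (mul_right_injective a)
  have hins : (insert (1 : G) ((a * ·) '' divs S b)).ncard
      = ((a * ·) '' divs S b).ncard + 1 :=
    Set.ncard_insert_of_notMem h1 (hfinb.image _)
  have hle : (insert (1 : G) ((a * ·) '' divs S b)).ncard ≤ (divs S (a * b)).ncard :=
    Set.ncard_le_ncard hsub hfin
  omega

theorem ncard_divs_lt_right (hS : IntegralMonoid S) {a b : G} (ha : a ∈ S) (hb : b ∈ S)
    (hne : b ≠ 1) : (divs S a).ncard < (divs S (a * b)).ncard := by
  have hab : a * b ∈ S := S.mul_mem ha hb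
  have hfin := divs_finite S hS hab
  have hsub : divs S a ⊆ divs S (a * b) := by
    rintro x ⟨hxS, hxd⟩
    exact ⟨hxS, sdvd_trans S hxd (sdvd_mul S hb)⟩
  have hmem : a * b ∈ divs S (a * b) := self_mem_divs S hab
  have hnotmem : a * b ∉ divs S a := by
    rintro ⟨_, hd⟩
    have : a * b = a := sdvd_antisymm S hS hd (sdvd_mul S hb)
    apply hne
    have : a * b = a * 1 := by rw [mul_one]; exact this
    exact mul_left_cancel this
  exact Set.ncard_lt_ncard ((Set.ssubset_iff_of_subset hsub).mpr ⟨a * b, hmem, hnotmem⟩) hfin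

/-- irreducible elements -/
def Irr (x : G) : Prop := x ∈ S ∧ x ≠ 1 ∧ ∀ a ∈ S, SDvd S a x → a = 1 ∨ a = x

theorem irr_of_tau (hS : IntegralMonoid S) {x : G} (hx : x ∈ S) (ht : tau S x = 2) :
    Irr S x := by
  have hfin : {p : G × G | p.1 ∈ S ∧ p.2 ∈ S ∧ p.1 * p.2 = x}.Finite := hS.ax3 x hx
  have hcard : {p : G × G | p.1 ∈ S ∧ p.2 ∈ S ∧ p.1 * p.2 = x}.ncard = 2 := ht
  have hx1 : x ≠ 1 := by
    rintro rfl
    have hT : {p : G × G | p.1 ∈ S ∧ p.2 ∈ S ∧ p.1 * p.2 = (1:G)} = {((1:G), (1:G))} := by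
      ext ⟨v, w⟩
      simp only [Set.mem_setOf_eq, Set.mem_singleton_iff, Prod.mk.injEq]
      constructor
      · rintro ⟨hv, hw, hvw⟩
        have hw' : w = v⁻¹ := (inv_eq_of_mul_eq_one_right hvw).symm
        have hv1 : v = 1 := hS.ax1 v hv (by rw [← hw']; exact hw)
        exact ⟨hv1, by rw [hw', hv1, inv_one]⟩
      · rintro ⟨rfl, rfl⟩
        exact ⟨S.one_mem, S.one_mem, mul_one 1⟩
    rw [hT, Set.ncard_singleton] at hcard
    exact absurd hcard (by norm_num)
  refine ⟨hx, hx1, ?_⟩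
  have hpair_ne : ((1 : G), x) ≠ (x, (1 : G)) := by
    intro h
    exact hx1 (congrArg Prod.fst h).symm
  have hsub : {((1 : G), x), (x, (1 : G))} ⊆
      {p : G × G | p.1 ∈ S ∧ p.2 ∈ S ∧ p.1 * p.2 = x} := by
    rintro p hp
    rcases hp with rfl | rfl
    · exact ⟨S.one_mem, hx, one_mul x⟩
    · exact ⟨hx, S.one_mem, mul_one x⟩
  have heq : {((1 : G), x), (x, (1 : G))} =
      {p : G × G | p.1 ∈ S ∧ p.2 ∈ S ∧ p.1 * p.2 = x} :=
    Set.eq_of_subset_of_ncard_le hsub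
      (by rw [hcard, Set.ncard_pair hpair_ne]) hfin
  intro a ha hdvd
  obtain ⟨s, hs, hxas⟩ := hdvd
  have hmem : (a, s) ∈ {p : G × G | p.1 ∈ S ∧ p.2 ∈ S ∧ p.1 * p.2 = x} :=
    ⟨ha, hs, hxas.symm⟩
  rw [← heq] at hmem
  rcases hmem with h | h
  · left; exact congrArg Prod.fst h
  · right; exact congrArg Prod.fst h

end IMaux
namespace IMaux

variable {G : Type*} [Group G] (S : Submonoid G)

theorem hom_cancel (hS : IntegralMonoid S) (hhom : Homogeneous S) {w q z m : G}
    (hw : w ∈ S) (hq : q ∈ S) (hz : z ∈ S)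
    (hm : IsLcm S w q m)
    (h1 : ∀ c ∈ S, SDvd S c w → SDvd S c q → c = 1)
    (h2 : ∀ c ∈ S, SDvd S c w → SDvd S c (q * z) → c = 1)
    (hdvd : SDvd S (q * z) m) : z = 1 := by
  have hm2 : IsLcm S w (q * z) m :=
    ⟨hm.1, hm.2.1, hdvd, fun t h1t h2t => hm.2.2.2 t h1t (sdvd_trans S (sdvd_mul S hz) h2t)⟩
  have hqz : q = q * z := hhom w q (q * z) hw hq (S.mul_mem hq hz) h1 h2
    (by rw [leftSet_eq_of_isLcm S hm, leftSet_eq_of_isLcm S hm2])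
  have : q * 1 = q * z := by rw [mul_one]; exact hqz
  exact (mul_left_cancel this).symm

theorem lcm_irr_complement (hS : IntegralMonoid S) (hhom : Homogeneous S) {u q m : G}
    (hu : u ∈ S) (hq : Irr S q)
    (hgcd : ∀ c ∈ S, SDvd S c u → SDvd S c q → c = 1)
    (hm : IsLcm S u q m) : ∃ a, Irr S a ∧ m = u * a := by
  obtain ⟨a, haS, hma⟩ := hm.2.1
  refine ⟨a, ⟨haS, ?_, ?_⟩, hma⟩
  · intro ha1
    have hqu : SDvd S q u := by
      rw [ha1, mul_one] at hma
      rw [← hma]; exact hm.2.2.1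
    exact hq.2.1 (hgcd q hq.1 hqu (sdvd_refl S))
  · intro t htS htdvd
    by_cases hta : t = a
    · exact Or.inr hta
    left
    refine hom_cancel S hS hhom hq.1 hu htS (isLcm_swap S hm)
      (fun c hc hc1 hc2 => hgcd c hc hc2 hc1) ?_ ?_
    · intro c hc hcq hcut
      rcases hq.2.2 c hc hcq with rfl | rfl
      · rfl
      · exfalso
        have hut : SDvd S m (u * t) :=
          hm.2.2.2 _ (sdvd_mul S htS) hcut
        have hat : SDvd S a t := by
          apply sdvd_of_mul_sdvd S (a := u)
          rw [← hma]; exact hut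
        exact hta (sdvd_antisymm S hS htdvd hat)
    · rw [hma]; exact sdvd_mul_left S htdvd

theorem irr_coprime {p q : G} (hp : Irr S p) (hq : Irr S q) (hne : p ≠ q) :
    ∀ c ∈ S, SDvd S c p → SDvd S c q → c = 1 := by
  intro c hc hcp hcq
  rcases hp.2.2 c hc hcp with h1 | h1
  · exact h1
  · rcases hq.2.2 c hc hcq with h | h
    · exact h
    · exact absurd (h1.symm.trans h) hne

theorem prod_mem {l : List G} (h : ∀ p ∈ l, Irr S p) : l.prod ∈ S :=
  list_prod_mem (fun x hx => (h x hx).1)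

theorem exists_fact (hS : IntegralMonoid S) :
    ∀ (n : ℕ) (x : G), x ∈ S → (divs S x).ncard ≤ n →
    ∃ l : List G, (∀ p ∈ l, Irr S p) ∧ l.prod = x := by
  intro n
  induction n with
  | zero =>
    intro x hx hn
    have := ncard_divs_pos S hS hx
    omega
  | succ n ih =>
    intro x hx hn
    by_cases hx1 : x = 1
    · exact ⟨[], by simp, by simp [hx1]⟩
    by_cases hirr : Irr S x
    · exact ⟨[x], by simpa using hirr, by simp⟩
    have hex : ∃ a ∈ S, SDvd S a x ∧ a ≠ 1 ∧ a ≠ x := by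
      by_contra hcon
      refine hirr ⟨hx, hx1, fun a ha hax => ?_⟩
      by_cases h1 : a = 1
      · exact Or.inl h1
      · refine Or.inr ?_
        by_contra h2
        exact hcon ⟨a, ha, hax, h1, h2⟩
    obtain ⟨a, haS, ⟨b, hbS, rfl⟩, ha1, hax⟩ := hex
    have hb1 : b ≠ 1 := by
      intro hb1
      exact hax (by rw [hb1, mul_one])
    have hna : (divs S a).ncard ≤ n := by
      have := ncard_divs_lt_right S hS haS hbS hb1
      omega
    have hnb : (divs S b).ncard ≤ n := by
      have := ncard_divs_lt_left S hS haS hbS ha1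
      omega
    obtain ⟨la, hla, hpa⟩ := ih a haS hna
    obtain ⟨lb, hlb, hpb⟩ := ih b hbS hnb
    refine ⟨la ++ lb, ?_, by rw [List.prod_append, hpa, hpb]⟩
    intro p hp
    rcases List.mem_append.mp hp with h | h
    · exact hla p h
    · exact hlb p h

end IMaux
namespace IMaux

variable {G : Type*} [Group G] (S : Submonoid G)

theorem len_inv (hS : IntegralMonoid S) (hhom : Homogeneous S) :
    ∀ (n : ℕ) (x : G), x ∈ S → (divs S x).ncard ≤ n →
    ∀ l₁ l₂ : List G, (∀ p ∈ l₁, Irr S p) → (∀ p ∈ l₂, Irr S p) →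
    l₁.prod = x → l₂.prod = x → l₁.length = l₂.length := by
  intro n
  induction n with
  | zero =>
    intro x hx hn
    have := ncard_divs_pos S hS hx
    omega
  | succ n ih =>
    intro x hx hn l₁ l₂ h1 h2 hp1 hp2
    cases l₁ with
    | nil =>
      cases l₂ with
      | nil => rfl
      | cons q t₂ =>
        exfalso
        simp only [List.prod_nil] at hp1
        simp only [List.prod_cons] at hp2
        have hq : Irr S q := h2 q List.mem_cons_self
        have ht₂S : t₂.prod ∈ S := prod_mem S (fun p hp => h2 p (List.mem_cons_of_mem q hp))
        apply hq.2.1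
        apply hS.ax1 q hq.1
        have : q⁻¹ = t₂.prod := by
          rw [← hp1] at hp2
          exact inv_eq_of_mul_eq_one_right hp2
        rw [this]; exact ht₂S
    | cons p t₁ =>
      have hp : Irr S p := h1 p List.mem_cons_self
      have ht₁ : ∀ r ∈ t₁, Irr S r := fun r hr => h1 r (List.mem_cons_of_mem p hr)
      have ht₁S : t₁.prod ∈ S := prod_mem S ht₁
      simp only [List.prod_cons] at hp1
      cases l₂ with
      | nil =>
        exfalso
        simp only [List.prod_nil] at hp2
        apply hp.2.1
        apply hS.ax1 p hp.1
        have : p⁻¹ = t₁.prod := by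
          rw [← hp2] at hp1
          exact inv_eq_of_mul_eq_one_right hp1
        rw [this]; exact ht₁S
      | cons q t₂ =>
        have hq : Irr S q := h2 q List.mem_cons_self
        have ht₂ : ∀ r ∈ t₂, Irr S r := fun r hr => h2 r (List.mem_cons_of_mem q hr)
        have ht₂S : t₂.prod ∈ S := prod_mem S ht₂
        simp only [List.prod_cons] at hp2
        have hmeas1 : (divs S t₁.prod).ncard ≤ n := by
          have := ncard_divs_lt_left S hS hp.1 ht₁S hp.2.1
          rw [hp1] at this
          omega
        by_cases hpq : p = q
        · subst hpq
          have heq : t₁.prod = t₂.prod := mul_left_cancel (hp1.trans hp2.symm)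
          have hlen := ih t₁.prod ht₁S hmeas1 t₁ t₂ ht₁ ht₂ rfl heq.symm
          simp [hlen]
        · obtain ⟨m, hm⟩ := exists_isLcm S hS hp.1 hq.1
          obtain ⟨b, hbIrr, hmb⟩ := lcm_irr_complement S hS hhom hp.1 hq
            (irr_coprime S hp hq hpq) hm
          obtain ⟨a, haIrr, hma⟩ := lcm_irr_complement S hS hhom hq.1 hp
            (irr_coprime S hq hp (Ne.symm hpq)) (isLcm_swap S hm)
          have hmx : SDvd S m x :=
            hm.2.2.2 x ⟨t₁.prod, ht₁S, hp1.symm⟩ ⟨t₂.prod, ht₂S, hp2.symm⟩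
          obtain ⟨r, hrS, hxr⟩ := hmx
          obtain ⟨lr, hlrIrr, hlrp⟩ := exists_fact S hS (divs S r).ncard r hrS le_rfl
          have ht1eq : t₁.prod = b * r := by
            apply mul_left_cancel (a := p)
            rw [hp1, hxr, hmb, mul_assoc]
          have ht2eq : t₂.prod = a * r := by
            apply mul_left_cancel (a := q)
            rw [hp2, hxr, hma, mul_assoc]
          have hmeas2 : (divs S t₂.prod).ncard ≤ n := by
            have := ncard_divs_lt_left S hS hq.1 ht₂S hq.2.1
            rw [hp2] at this
            omega
          have hlen1 : t₁.length = (b :: lr).length := by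
            apply ih t₁.prod ht₁S hmeas1 t₁ (b :: lr) ht₁ ?_ rfl ?_
            · intro s hs
              rcases List.mem_cons.mp hs with rfl | hs'
              · exact hbIrr
              · exact hlrIrr s hs'
            · rw [List.prod_cons, hlrp, ht1eq]
          have hlen2 : t₂.length = (a :: lr).length := by
            apply ih t₂.prod ht₂S hmeas2 t₂ (a :: lr) ht₂ ?_ rfl ?_
            · intro s hs
              rcases List.mem_cons.mp hs with rfl | hs'
              · exact haIrr
              · exact hlrIrr s hs'
            · rw [List.prod_cons, hlrp, ht2eq]
          simp only [List.length_cons] at hlen1 hlen2 ⊢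
          omega

theorem lcm_coprime_fact (hS : IntegralMonoid S) (hhom : Homogeneous S) :
    ∀ (lv : List G) (u v m : G), u ∈ S → v ∈ S →
    (∀ c ∈ S, SDvd S c u → SDvd S c v → c = 1) → IsLcm S u v m →
    (∀ p ∈ lv, Irr S p) → lv.prod = v →
    ∃ lw : List G, (∀ p ∈ lw, Irr S p) ∧ m = u * lw.prod ∧ lw.length = lv.length := by
  intro lv
  induction lv with
  | nil =>
    intro u v m hu hv hgcd hm hirr hprod
    simp only [List.prod_nil] at hprod
    refine ⟨[], by simp, ?_, rfl⟩
    have hmu : m = u := by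
      apply sdvd_antisymm S hS ?_ hm.2.1
      exact hm.2.2.2 u (sdvd_refl S) (by rw [← hprod]; exact one_sdvd S hu)
    rw [hmu]; simp
  | cons q lv₂ ih =>
    intro u v m hu hv hgcd hm hirr hprod
    simp only [List.prod_cons] at hprod
    have hq : Irr S q := hirr q List.mem_cons_self
    have hlv₂ : ∀ p ∈ lv₂, Irr S p := fun p hp => hirr p (List.mem_cons_of_mem q hp)
    have hv₂S : lv₂.prod ∈ S := prod_mem S hlv₂
    -- gcd(u, q) = 1
    have hgcd_uq : ∀ c ∈ S, SDvd S c u → SDvd S c q → c = 1 := by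
      intro c hc hcu hcq
      rcases hq.2.2 c hc hcq with h | h
      · exact h
      · subst h
        exact hgcd c hc hcu ⟨lv₂.prod, hv₂S, hprod.symm⟩
    obtain ⟨m₁, hm₁⟩ := exists_isLcm S hS hu hq.1
    obtain ⟨q₁, hq₁Irr, hm₁q₁⟩ := lcm_irr_complement S hS hhom hu hq hgcd_uq hm₁
    obtain ⟨u₁, hu₁S, hm₁u₁⟩ := hm₁.2.2.1  -- m₁ = q * u₁
    -- q divides m
    have hqm : SDvd S q m := sdvd_trans S ⟨lv₂.prod, hv₂S, hprod.symm⟩ hm.2.2.1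
    obtain ⟨m₂, hm₂S, hmm₂⟩ := hqm  -- m = q * m₂
    -- m₁ divides m
    have hm₁m : SDvd S m₁ m :=
      hm₁.2.2.2 m hm.2.1 (sdvd_trans S ⟨lv₂.prod, hv₂S, hprod.symm⟩ hm.2.2.1)
    have hIsLcm₂ : IsLcm S u₁ lv₂.prod m₂ := by
      refine ⟨hm₂S, ?_, ?_, ?_⟩
      · apply sdvd_of_mul_sdvd S (a := q)
        rw [← hm₁u₁, ← hmm₂]; exact hm₁m
      · apply sdvd_of_mul_sdvd S (a := q)
        rw [← hmm₂, hprod]; exact hm.2.2.1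
      · intro t h1t h2t
        have hmt : SDvd S m (q * t) := by
          apply hm.2.2.2
          · exact sdvd_trans S (hm₁u₁ ▸ hm₁.2.1) (sdvd_mul_left S h1t)
          · exact hprod ▸ (sdvd_mul_left S h2t)
        exact sdvd_of_mul_sdvd S (hmm₂ ▸ hmt)
    have hgcd₂ : ∀ c ∈ S, SDvd S c u₁ → SDvd S c lv₂.prod → c = 1 := by
      intro c hc hcu₁ hcv₂
      refine hom_cancel S hS hhom hu hq.1 hc hm₁ hgcd_uq ?_ ?_
      · intro c' hc' hc'u hc'qc
        refine hgcd c' hc' hc'u ?_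
        exact sdvd_trans S hc'qc (hprod ▸ (sdvd_mul_left S hcv₂))
      · rw [hm₁u₁]; exact sdvd_mul_left S hcu₁
    obtain ⟨lw₂, hlw₂Irr, hm₂eq, hlen₂⟩ :=
      ih u₁ lv₂.prod m₂ hu₁S hv₂S hgcd₂ hIsLcm₂ hlv₂ rfl
    refine ⟨q₁ :: lw₂, ?_, ?_, ?_⟩
    · intro p hp
      rcases List.mem_cons.mp hp with rfl | hp'
      · exact hq₁Irr
      · exact hlw₂Irr p hp'
    · rw [List.prod_cons, hmm₂, hm₂eq, ← mul_assoc, ← hm₁u₁, hm₁q₁, mul_assoc]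
    · simp [hlen₂]

end IMaux
theorem ind_gcd_add_ind_lcm {G : Type*} [Group G] (S : Submonoid G)
    (hS : IntegralMonoid S) (hhom : Homogeneous S)
    (u v d m : G) (hu : u ∈ S) (hv : v ∈ S) (hd : d ∈ S) (hm : m ∈ S)
    (hd1 : SDvd S d u) (hd2 : SDvd S d v)
    (hd3 : ∀ e ∈ S, SDvd S e u → SDvd S e v → SDvd S e d)
    (hlcm : leftSet S u ∩ leftSet S v = leftSet S m)
    (ld lm lu lv : List G)
    (hld : ∀ x ∈ ld, x ∈ S ∧ tau S x = 2) (hlm : ∀ x ∈ lm, x ∈ S ∧ tau S x = 2)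
    (hlu : ∀ x ∈ lu, x ∈ S ∧ tau S x = 2) (hlv : ∀ x ∈ lv, x ∈ S ∧ tau S x = 2)
    (hpd : ld.prod = d) (hpm : lm.prod = m) (hpu : lu.prod = u) (hpv : lv.prod = v) :
    ld.length + lm.length = lu.length + lv.length := by
  have hldI : ∀ x ∈ ld, IMaux.Irr S x :=
    fun x hx => IMaux.irr_of_tau S hS (hld x hx).1 (hld x hx).2
  have hlmI : ∀ x ∈ lm, IMaux.Irr S x :=
    fun x hx => IMaux.irr_of_tau S hS (hlm x hx).1 (hlm x hx).2
  have hluI : ∀ x ∈ lu, IMaux.Irr S x :=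
    fun x hx => IMaux.irr_of_tau S hS (hlu x hx).1 (hlu x hx).2
  have hlvI : ∀ x ∈ lv, IMaux.Irr S x :=
    fun x hx => IMaux.irr_of_tau S hS (hlv x hx).1 (hlv x hx).2
  -- m is the lcm of u and v
  have hmLcm : IMaux.IsLcm S u v m := by
    refine ⟨hm, ?_, ?_, ?_⟩
    · have h : m ∈ leftSet S u ∩ leftSet S v := by
        rw [hlcm]; exact ⟨1, S.one_mem, (mul_one m).symm⟩
      exact h.1
    · have h : m ∈ leftSet S u ∩ leftSet S v := by
        rw [hlcm]; exact ⟨1, S.one_mem, (mul_one m).symm⟩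
      exact h.2
    · intro t h1 h2
      have h : t ∈ leftSet S m := by rw [← hlcm]; exact ⟨h1, h2⟩
      exact h
  obtain ⟨u₁, hu₁S, hu_eq⟩ := hd1
  obtain ⟨v₁, hv₁S, hv_eq⟩ := hd2
  obtain ⟨m₁, hm₁S, hm_eq⟩ :=
    IMaux.sdvd_trans S (⟨u₁, hu₁S, hu_eq⟩ : SDvd S d u) hmLcm.2.1
  -- m₁ is the lcm of u₁ and v₁
  have hIsLcm₁ : IMaux.IsLcm S u₁ v₁ m₁ := by
    refine ⟨hm₁S, ?_, ?_, ?_⟩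
    · apply IMaux.sdvd_of_mul_sdvd S (a := d)
      rw [← hu_eq, ← hm_eq]; exact hmLcm.2.1
    · apply IMaux.sdvd_of_mul_sdvd S (a := d)
      rw [← hv_eq, ← hm_eq]; exact hmLcm.2.2.1
    · intro t h1t h2t
      apply IMaux.sdvd_of_mul_sdvd S (a := d)
      rw [← hm_eq]
      apply hmLcm.2.2.2
      · rw [hu_eq]; exact IMaux.sdvd_mul_left S h1t
      · rw [hv_eq]; exact IMaux.sdvd_mul_left S h2t
  -- u₁ and v₁ have no common divisor
  have hgcd₁ : ∀ c ∈ S, SDvd S c u₁ → SDvd S c v₁ → c = 1 := by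
    intro c hc h1 h2
    obtain ⟨c', hc', hcc'⟩ := h1
    obtain ⟨c'', hc'', hcc''⟩ := h2
    have h3 : SDvd S (d * c) u := ⟨c', hc', by rw [hu_eq, hcc', mul_assoc]⟩
    have h4 : SDvd S (d * c) v := ⟨c'', hc'', by rw [hv_eq, hcc'', mul_assoc]⟩
    obtain ⟨s, hs, hds⟩ := hd3 (d * c) (S.mul_mem hd hc) h3 h4
    have hcs : c * s = 1 := by
      have : d * 1 = d * (c * s) := by rw [mul_one, ← mul_assoc]; exact hds
      exact (mul_left_cancel this).symm
    apply hS.ax1 c hc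
    rw [inv_eq_of_mul_eq_one_right hcs]
    exact hs
  obtain ⟨lu₁, hlu₁I, hlu₁p⟩ :=
    IMaux.exists_fact S hS (IMaux.divs S u₁).ncard u₁ hu₁S le_rfl
  obtain ⟨lv₁, hlv₁I, hlv₁p⟩ :=
    IMaux.exists_fact S hS (IMaux.divs S v₁).ncard v₁ hv₁S le_rfl
  obtain ⟨lw, hlwI, hm₁w, hlenw⟩ :=
    IMaux.lcm_coprime_fact S hS hhom lv₁ u₁ v₁ m₁ hu₁S hv₁S hgcd₁ hIsLcm₁ hlv₁I hlv₁p
  have linv := fun (x : G) (hx : x ∈ S) =>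
    IMaux.len_inv S hS hhom (IMaux.divs S x).ncard x hx le_rfl
  have happ1 : ∀ p ∈ ld ++ lu₁, IMaux.Irr S p := by
    intro p hp
    rcases List.mem_append.mp hp with h | h
    · exact hldI p h
    · exact hlu₁I p h
  have happ2 : ∀ p ∈ ld ++ lv₁, IMaux.Irr S p := by
    intro p hp
    rcases List.mem_append.mp hp with h | h
    · exact hldI p h
    · exact hlv₁I p h
  have happ3 : ∀ p ∈ ld ++ lu₁ ++ lw, IMaux.Irr S p := by
    intro p hp
    rcases List.mem_append.mp hp with h | h
    · exact happ1 p h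
    · exact hlwI p h
  have h_u : lu.length = (ld ++ lu₁).length :=
    linv u hu lu (ld ++ lu₁) hluI happ1 hpu
      (by rw [List.prod_append, hpd, hlu₁p]; exact hu_eq.symm)
  have h_v : lv.length = (ld ++ lv₁).length :=
    linv v hv lv (ld ++ lv₁) hlvI happ2 hpv
      (by rw [List.prod_append, hpd, hlv₁p]; exact hv_eq.symm)
  have h_m : lm.length = (ld ++ lu₁ ++ lw).length :=
    linv m hm lm (ld ++ lu₁ ++ lw) hlmI happ3 hpm
      (by rw [List.prod_append, List.prod_append, hpd, hlu₁p, mul_assoc, ← hm₁w]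
          exact hm_eq.symm)
  simp only [List.length_append] at h_u h_v h_m
  omega
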